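/- Let f be a coding function and v a vertex with no loop in G(f). Then f and its v-reduction f^{-v} have the same number of fixed points; more precisely, the projection x ↦ x_{-v} is a bijection from Fix(f) to Fix(f^{-v}). -/
import Mathlib


/-- Arc `(u,i)` of the interaction graph of a coding function `f`. -/
def arcCF {V A : Type*} [DecidableEq V] (f : (V → A) → V → A) (u i : V) : Prop :=
  ∃ (x : V → A) (a : A), f (Function.update x u a) i ≠ f x i

/-- Extend a state on `V \ {v}` to a full state by putting the value `c` at `v`. -/
def extV {V A : Type*} [DecidableEq V] (v : V) (y : {i : V // i ≠ v} → A) (c : A) :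
    V → A :=
  fun j => if h : j = v then c else y ⟨j, h⟩

/-- If `G(f)` has no loop on `v`, then the projection `x ↦ x_{-v}` is a bijection
from the fixed points of `f` onto the fixed points of the `v`-reduction `f^{-v}`,
i.e. onto the states `y` on `V \ {v}` satisfying `f_i(y, f_v(y)) = y_i` for all
`i ≠ v` (here `f_v(y)` is computed by extending `y` with an arbitrary value `c` at
`v`, which is irrelevant since there is no loop on `v`). -/
theorem stmt9 {V A : Type*} [DecidableEq V] [Nonempty A]
    (f : (V → A) → V → A) (v : V) (hv : ¬ arcCF f v v) :
    Set.BijOn (fun (x : V → A) (i : {i : V // i ≠ v}) => x i.1)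
      {x : V → A | f x = x}
      {y : {i : V // i ≠ v} → A |
        ∀ (c : A) (i : {i : V // i ≠ v}),
          f (extV v y (f (extV v y c) v)) i.1 = y i} := by
  have hfv : ∀ (x : V → A) a, f (Function.update x v a) v = f x v := by
    intro x a
    by_contra h
    exact hv ⟨x, a, h⟩
  have hext : ∀ (y : {i : V // i ≠ v} → A) c c',
      extV v y c = Function.update (extV v y c') v c := by
    intro y c c'
    funext j
    by_cases h : j = v
    · subst h; simp [extV, Function.update]
    · simp [extV, h, Function.update]
  have hextfix : ∀ (x : V → A) c,
      extV v (fun i : {i : V // i ≠ v} => x i.1) c = Function.update x v c := by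
    intro x c
    funext j
    by_cases h : j = v <;> simp [extV, h, Function.update]
  refine ⟨?_, ?_, ?_⟩
  · -- MapsTo
    intro x hx c i
    simp only [Set.mem_setOf_eq] at hx
    have h1 : f (extV v (fun i : {i : V // i ≠ v} => x i.1) c) v = x v := by
      rw [hextfix, hfv, hx]
    rw [h1, hextfix]
    have : Function.update x v (x v) = x := Function.update_eq_self v x
    rw [this, hx]
  · -- InjOn
    intro x hx x' hx' hxy
    simp only [Set.mem_setOf_eq] at hx hx'
    have hoff : ∀ j, j ≠ v → x j = x' j := fun j h => congrFun hxy ⟨j, h⟩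
    have hx'eq : x' = Function.update x v (x' v) := by
      funext j
      by_cases h : j = v
      · subst h; simp [Function.update]
      · simp [Function.update, h, hoff j h]
    have : x v = x' v := by
      have := hfv x (x' v)
      rw [← hx'eq] at this
      rw [← congrFun hx' v, this, congrFun hx v]
    funext j
    by_cases h : j = v
    · subst h; exact this
    · exact hoff j h
  · -- SurjOn
    intro y hy
    simp only [Set.mem_setOf_eq] at hy
    obtain ⟨c⟩ := ‹Nonempty A›
    set b := f (extV v y c) v with hb
    refine ⟨extV v y b, ?_, ?_⟩
    · simp only [Set.mem_setOf_eq]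
      funext j
      by_cases h : j = v
      · have hfb : f (extV v y b) v = b := by
          rw [hext y b c, hfv]
        subst h
        rw [hfb]
        simp [extV]
      · have := hy c ⟨j, h⟩
        simpa [extV, h] using this
    · funext i
      simp [extV, i.2]
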